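/- For any d × d complex matrix ρ with d = 2^n, (1/4^n) Σ_{r,s ∈ {0,1}^n} X^r Z^s ρ Z^s X^r = (Tr ρ / 2^n) · I. In particular, for a density matrix ρ the average over all n-qubit Pauli operators of P ρ P† is the maximally mixed state. -/

import Mathlib

/-- The `n`-qubit Pauli operator `X^r Z^s`. -/
def pauli (n : ℕ) (r s : Fin n → ZMod 2) :
    Matrix (Fin n → ZMod 2) (Fin n → ZMod 2) ℂ :=
  Matrix.of fun i j => if i = r + j then (-1 : ℂ) ^ (∑ k, s k * j k).val else 0

namespace PauliAux

/-- The sign character on `ZMod 2`. -/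
def e (a : ZMod 2) : ℂ := (-1) ^ a.val

lemma e_add (a b : ZMod 2) : e (a + b) = e a * e b := by
  rcases (show ∀ a : ZMod 2, a = 0 ∨ a = 1 by decide) a with rfl | rfl <;>
    rcases (show ∀ a : ZMod 2, a = 0 ∨ a = 1 by decide) b with rfl | rfl <;>
    simp [e, show ((1 : ZMod 2) + 1).val = 0 from rfl, show ((1 : ZMod 2)).val = 1 from rfl] <;> norm_num

lemma e_zero : e 0 = 1 := rfl

lemma e_sum {α : Type*} (t : Finset α) (f : α → ZMod 2) :
    e (∑ k ∈ t, f k) = ∏ k ∈ t, e (f k) := by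
  induction t using Finset.cons_induction with
  | empty => simp [e]
  | cons a t ha ih => rw [Finset.sum_cons, Finset.prod_cons, e_add, ih]

variable {n : ℕ}

/-- Orthogonality: `∑ s, (-1)^{s·w} = 2^n` if `w = 0`, else `0`. -/
lemma sum_e (w : Fin n → ZMod 2) :
    ∑ s : Fin n → ZMod 2, e (∑ k, s k * w k) = if w = 0 then (2 : ℂ) ^ n else 0 := by
  have h1 : ∀ s : Fin n → ZMod 2, e (∑ k, s k * w k) = ∏ k, e (s k * w k) :=
    fun s => e_sum _ _
  simp only [h1]
  rw [← Fintype.prod_sum fun (k : Fin n) (a : ZMod 2) => e (a * w k)]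
  have h2 : ∀ k : Fin n, (∑ a : ZMod 2, e (a * w k)) = if w k = 0 then 2 else 0 := by
    intro k
    have : (Finset.univ : Finset (ZMod 2)) = {0, 1} := by decide
    rw [this, Finset.sum_insert (by decide), Finset.sum_singleton]
    rcases (show ∀ a : ZMod 2, a = 0 ∨ a = 1 by decide) (w k) with h | h <;>
      simp [h, e, show ((1 : ZMod 2)).val = 1 from rfl] <;> norm_num
  simp only [h2]
  by_cases hw : w = 0
  · subst hw; simp
  · rw [if_neg hw]
    obtain ⟨k, hk⟩ : ∃ k, w k ≠ 0 := by
      by_contra h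
      push_neg at h
      exact hw (funext h)
    exact Finset.prod_eq_zero (Finset.mem_univ k) (by rw [if_neg hk])

lemma hchar (v : Fin n → ZMod 2) : v + v = 0 := by
  funext k
  simp [CharTwo.add_self_eq_zero]

lemma pauli_mul_apply (r s i b : Fin n → ZMod 2)
    (M : Matrix (Fin n → ZMod 2) (Fin n → ZMod 2) ℂ) :
    (pauli n r s * M) i b = e (∑ k, s k * (r + i) k) * M (r + i) b := by
  rw [Matrix.mul_apply]
  rw [Finset.sum_eq_single (r + i)]
  · simp only [pauli, Matrix.of_apply, e]
    rw [if_pos (by rw [← add_assoc, hchar r, zero_add])]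
  · intro a _ ha
    simp only [pauli, Matrix.of_apply]
    rw [if_neg, zero_mul]
    rintro rfl
    exact ha (by rw [← add_assoc, hchar r, zero_add])
  · intro h; exact absurd (Finset.mem_univ _) h

lemma mul_pauliZ_apply (s a j : Fin n → ZMod 2)
    (M : Matrix (Fin n → ZMod 2) (Fin n → ZMod 2) ℂ) :
    (M * pauli n 0 s) a j = M a j * e (∑ k, s k * j k) := by
  rw [Matrix.mul_apply]
  rw [Finset.sum_eq_single j]
  · simp [pauli, e]
  · intro b _ hb
    simp [pauli, hb]
  · intro h; exact absurd (Finset.mem_univ _) h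

lemma mul_pauliX_apply (r a j : Fin n → ZMod 2)
    (M : Matrix (Fin n → ZMod 2) (Fin n → ZMod 2) ℂ) :
    (M * pauli n r 0) a j = M a (r + j) := by
  rw [Matrix.mul_apply]
  rw [Finset.sum_eq_single (r + j)]
  · simp [pauli]
  · intro b _ hb
    simp [pauli, hb]
  · intro h; exact absurd (Finset.mem_univ _) h

lemma e_mul_e (s u v : Fin n → ZMod 2) :
    e (∑ k, s k * u k) * e (∑ k, s k * v k) = e (∑ k, s k * (u + v) k) := by
  rw [← e_add]
  congr 1
  rw [← Finset.sum_add_distrib]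
  exact Finset.sum_congr rfl fun k _ => by simp [mul_add]

end PauliAux

/-- the n-qubit Pauli group is a unitary 1-design: the average of
`X^r Z^s ρ Z^s X^r` over all `r, s ∈ {0,1}^n` equals `(Tr ρ / 2^n) · I`. -/
theorem stmt_3 (n : ℕ) (ρ : Matrix (Fin n → ZMod 2) (Fin n → ZMod 2) ℂ) :
    ((4 : ℂ) ^ n)⁻¹ •
        ∑ r : Fin n → ZMod 2, ∑ s : Fin n → ZMod 2,
          pauli n r s * ρ * pauli n 0 s * pauli n r 0 =
      (ρ.trace / 2 ^ n) • (1 : Matrix (Fin n → ZMod 2) (Fin n → ZMod 2) ℂ) := by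
  open PauliAux in
  ext i j
  simp only [Matrix.smul_apply, Matrix.sum_apply, smul_eq_mul, Matrix.one_apply]
  have hentry : ∀ r s : Fin n → ZMod 2,
      (pauli n r s * ρ * pauli n 0 s * pauli n r 0) i j =
        ρ (r + i) (r + j) * e (∑ k, s k * (i + j) k) := by
    intro r s
    rw [mul_pauliX_apply, mul_pauliZ_apply, pauli_mul_apply]
    rw [mul_comm (e _), mul_assoc, e_mul_e]
    congr 2
    rw [add_add_add_comm, hchar, zero_add]
  have hif : (i + j = 0) ↔ (i = j) := by
    constructor
    · intro h
      have : i + (j + j) = 0 + j := by rw [← add_assoc, h]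
      rwa [hchar, add_zero, zero_add] at this
    · rintro rfl; exact hchar i
  have key : ∀ r : Fin n → ZMod 2,
      (∑ s : Fin n → ZMod 2, (pauli n r s * ρ * pauli n 0 s * pauli n r 0) i j) =
        ρ (r + i) (r + j) * (if i = j then (2 : ℂ) ^ n else 0) := by
    intro r
    simp only [hentry]
    rw [← Finset.mul_sum, sum_e]
    congr 1
    simp only [hif]
  simp only [key]
  by_cases hij : i = j
  · subst hij
    simp only [if_pos rfl, ↓reduceIte, ← Finset.sum_mul]
    have htr : (∑ r : Fin n → ZMod 2, ρ (r + i) (r + i)) = ρ.trace := by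
      rw [Matrix.trace]
      exact Fintype.sum_equiv (Equiv.addRight i) _ _ (fun r => rfl)
    rw [htr]
    have h2 : (2 : ℂ) ^ n ≠ 0 := pow_ne_zero _ two_ne_zero
    rw [show (4 : ℂ) = 2 * 2 by norm_num, mul_pow]
    field_simp
  · simp [hij]
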